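/- Let G = (V,E) be a finite connected simple graph and let O be an orientation of G. The following are equivalent: (i) O is strongly connected, i.e. every vertex is reachable from every vertex; (ii) O has no directed cocycle; (iii) for every edge of G, the origin of the corresponding arc is reachable from its end. -/

import Mathlib

/-- An orientation of a simple graph: a choice of direction for each edge. -/
structure GraphOrientation {V : Type*} (G : SimpleGraph V) where
  dir : V → V → Prop
  adj_of_dir : ∀ u v, dir u v → G.Adj u v
  dir_iff_not : ∀ u v, G.Adj u v → (dir u v ↔ ¬ dir v u)

namespace GraphOrientation

variable {V : Type*} {G : SimpleGraph V}

/-- The outdegree of a vertex: the number of edges directed away from it. -/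
noncomputable def outDegree (O : GraphOrientation G) (v : V) : ℕ :=
  {u | O.dir v u}.ncard

/-- `v` is reachable from `u` by a directed path. -/
def Reaches (O : GraphOrientation G) : V → V → Prop :=
  Relation.ReflTransGen O.dir

/-- `C` is the edge set of a directed cycle of the orientation. -/
def IsDirCycle (O : GraphOrientation G) (C : Set (Sym2 V)) : Prop :=
  ∃ (v : V) (w : G.Walk v v), w.IsCycle ∧
    (∀ d ∈ w.darts, O.dir d.toProd.1 d.toProd.2) ∧ C = {e | e ∈ w.edges}

/-- The orientation is strongly connected. -/
def IsStronglyConnected (O : GraphOrientation G) : Prop := ∀ u v, O.Reaches u v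

/-- Every vertex is reachable from `v0`. -/
def IsConnectedFrom (O : GraphOrientation G) (v0 : V) : Prop := ∀ v, O.Reaches v0 v

/-- The set of edges on which two orientations differ. -/
def diffSet (O O' : GraphOrientation G) : Set (Sym2 V) :=
  {e | ∃ a b, e = s(a, b) ∧ O.dir a b ∧ O'.dir b a}

/-- `O'` is obtained from `O` by reversing exactly the edges of `A`. -/
def IsFlipOn (O O' : GraphOrientation G) (A : Set (Sym2 V)) : Prop :=
  (∀ u v, s(u, v) ∈ A → (O'.dir u v ↔ O.dir v u)) ∧
    (∀ u v, s(u, v) ∉ A → (O'.dir u v ↔ O.dir u v))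

/-- One cycle-flip step. -/
def CycleFlip (O O' : GraphOrientation G) : Prop :=
  ∃ C, O.IsDirCycle C ∧ O.IsFlipOn O' C

end GraphOrientation

/-- The cut defined by a vertex subset `U`: edges with exactly one endpoint in `U`. -/
def SimpleGraph.cutSet {V : Type*} (G : SimpleGraph V) (U : Set V) : Set (Sym2 V) :=
  {e | ∃ a b, e = s(a, b) ∧ G.Adj a b ∧ a ∈ U ∧ b ∉ U}

/-- A cocycle: a minimal nonempty cut. -/
def SimpleGraph.IsCocycle {V : Type*} (G : SimpleGraph V) (D : Set (Sym2 V)) : Prop :=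
  D.Nonempty ∧ (∃ U : Set V, D = G.cutSet U) ∧
    ∀ D' : Set (Sym2 V), D'.Nonempty → (∃ U : Set V, D' = G.cutSet U) → D' ⊆ D → D' = D

/-- A directed cocycle: a cocycle all of whose edges are directed toward the same side. -/
def GraphOrientation.IsDirCocycle {V : Type*} {G : SimpleGraph V}
    (O : GraphOrientation G) (D : Set (Sym2 V)) : Prop :=
  G.IsCocycle D ∧ ∃ U : Set V, D = G.cutSet U ∧ ∀ a b, O.dir a b → s(a, b) ∈ D → b ∈ U

/-- The excess of a subset of vertices with respect to `δ : V → ℕ`. -/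
noncomputable def SimpleGraph.excess {V : Type*} (G : SimpleGraph V) (δ : V → ℕ)
    (U : Finset V) : ℤ :=
  (∑ u ∈ U, (δ u : ℤ)) - ({e | e ∈ G.edgeSet ∧ ∀ x ∈ e, x ∈ U} : Set (Sym2 V)).ncard

/-- `C` is the edge set of a cycle of `G`. -/
def SimpleGraph.IsCycleEdgeSet {V : Type*} (G : SimpleGraph V) (C : Set (Sym2 V)) : Prop :=
  ∃ (v : V) (w : G.Walk v v), w.IsCycle ∧ C = {e | e ∈ w.edges}

/-- The number of connected components of the spanning subgraph `(V, S)`. -/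
noncomputable def numComponents (V : Type*) (S : Set (Sym2 V)) : ℕ :=
  Nat.card (SimpleGraph.fromEdgeSet S).ConnectedComponent

section Aux

open Relation

variable {V : Type*} {G : SimpleGraph V}

/-- Step relation within a vertex set. -/
private def stepIn (G : SimpleGraph V) (A : Set V) (x y : V) : Prop :=
  G.Adj x y ∧ x ∈ A ∧ y ∈ A

private lemma stepIn_symm {A : Set V} : Symmetric (stepIn G A) :=
  fun _ _ ⟨h1, h2, h3⟩ => ⟨h1.symm, h3, h2⟩

private lemma rtg_mem {A : Set V} {x y : V}
    (h : Relation.ReflTransGen (stepIn G A) x y) (hx : x ∈ A) : y ∈ A := by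
  induction h with
  | refl => exact hx
  | tail _ hs _ => exact hs.2.2

private lemma cutSet_compl (A : Set V) : G.cutSet Aᶜ = G.cutSet A := by
  ext e
  constructor
  · rintro ⟨p, q, rfl, hadj, hp, hq⟩
    exact ⟨q, p, Sym2.eq_swap, hadj.symm, not_not.mp hq, hp⟩
  · rintro ⟨p, q, rfl, hadj, hp, hq⟩
    exact ⟨q, p, Sym2.eq_swap, hadj.symm, hq, not_not_intro hp⟩

private lemma totalDir (O : GraphOrientation G) {u v : V} (h : G.Adj u v) :
    O.dir u v ∨ O.dir v u := by
  by_cases hd : O.dir u v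
  · exact Or.inl hd
  · exact Or.inr ((O.dir_iff_not v u h.symm).mpr hd)

/-- If every edge between two vertices of `A` is not in `D' = cutSet U'`, then membership
in `U'` is constant along `stepIn A` paths. -/
private lemma side_const {A U' : Set V} {D' : Set (Sym2 V)} (hD' : D' = G.cutSet U')
    (hgood : ∀ x y, G.Adj x y → x ∈ A → y ∈ A → s(x, y) ∉ D')
    {x y : V} (h : Relation.ReflTransGen (stepIn G A) x y) : x ∈ U' ↔ y ∈ U' := by
  induction h with
  | refl => exact Iff.rfl
  | @tail m n h' hs ih =>
    refine ih.trans ?_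
    constructor
    · intro hm
      by_contra hn
      exact hgood m n hs.1 hs.2.1 hs.2.2 (hD' ▸ ⟨m, n, rfl, hs.1, hm, hn⟩)
    · intro hn
      by_contra hm
      exact hgood n m hs.1.symm hs.2.2 hs.2.1 (hD' ▸ ⟨n, m, rfl, hs.1.symm, hn, hm⟩)

/-- A cut whose two sides are each connected is minimal among nonempty cuts. -/
private lemma cut_minimal {Wset Xset : Set V}
    (hpart : ∀ z, z ∈ Wset ↔ z ∉ Xset)
    (hWc : ∀ x y, x ∈ Wset → y ∈ Wset → Relation.ReflTransGen (stepIn G Wset) x y)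
    (hXc : ∀ x y, x ∈ Xset → y ∈ Xset → Relation.ReflTransGen (stepIn G Xset) x y)
    {D' : Set (Sym2 V)} (hne : D'.Nonempty) {U' : Set V} (hD' : D' = G.cutSet U')
    (hsub : D' ⊆ G.cutSet Wset) : D' = G.cutSet Wset := by
  classical
  -- every edge of D' has exactly one endpoint in Wset
  have hcross : ∀ x y, s(x, y) ∈ D' → (x ∈ Wset ∧ y ∉ Wset) ∨ (x ∉ Wset ∧ y ∈ Wset) := by
    intro x y hxy
    obtain ⟨p, q, heq, _, hp, hq⟩ := hsub hxy
    rcases Sym2.eq_iff.mp heq with ⟨rfl, rfl⟩ | ⟨rfl, rfl⟩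
    · exact Or.inl ⟨hp, hq⟩
    · exact Or.inr ⟨hq, hp⟩
  have hgoodW : ∀ x y, G.Adj x y → x ∈ Wset → y ∈ Wset → s(x, y) ∉ D' := by
    intro x y _ hx hy hmem
    rcases hcross x y hmem with ⟨_, h⟩ | ⟨h, _⟩ <;> exact h (by assumption)
  have hgoodX : ∀ x y, G.Adj x y → x ∈ Xset → y ∈ Xset → s(x, y) ∉ D' := by
    intro x y _ hx hy hmem
    rcases hcross x y hmem with ⟨h, _⟩ | ⟨_, h⟩
    · exact ((hpart x).mp h) hx
    · exact ((hpart y).mp h) hy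
  have sideW : ∀ x y, x ∈ Wset → y ∈ Wset → (x ∈ U' ↔ y ∈ U') :=
    fun x y hx hy => side_const hD' hgoodW (hWc x y hx hy)
  have sideX : ∀ x y, x ∈ Xset → y ∈ Xset → (x ∈ U' ↔ y ∈ U') :=
    fun x y hx hy => side_const hD' hgoodX (hXc x y hx hy)
  have hXofW : ∀ z, z ∉ Wset → z ∈ Xset := by
    intro z hz
    by_contra hzX
    exact hz ((hpart z).mpr hzX)
  obtain ⟨e, he⟩ := hne
  have heU' : e ∈ G.cutSet U' := hD' ▸ he
  obtain ⟨p, q, rfl, hadj, hpU', hqU'⟩ := heU'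
  rcases hcross p q he with ⟨hpW, hqW⟩ | ⟨hpW, hqW⟩
  · -- U' = Wset
    have hU'eq : U' = Wset := by
      ext z
      constructor
      · intro hz
        by_contra hzW
        exact hqU' ((sideX z q (hXofW z hzW) (hXofW q hqW)).mp hz)
      · intro hz
        exact (sideW z p hz hpW).mpr hpU'
    rw [hD', hU'eq]
  · -- U' = Xset
    have hU'eq : U' = Xset := by
      ext z
      constructor
      · intro hz
        by_contra hzX
        exact hqU' ((sideW z q ((hpart z).mpr hzX) hqW).mp hz)
      · intro hz
        exact (sideX z p hz (hXofW p hpW)).mpr hpU'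
    have hXc' : Xset = Wsetᶜ := by
      ext z
      simp only [Set.mem_compl_iff]
      constructor
      · intro hz hzW
        exact (hpart z).mp hzW hz
      · intro hz
        exact hXofW z hz
    rw [hD', hU'eq, hXc', cutSet_compl]

/-- From any vertex outside `U` one can walk inside `Uᶜ` to a vertex adjacent to `U`. -/
private lemma exit_lemma (hG : G.Connected) {U : Set V} {b0 : V} (hb : b0 ∈ U) :
    ∀ (v : V), v ∉ U → ∃ v' u',
      Relation.ReflTransGen (fun x y => G.Adj x y ∧ x ∉ U ∧ y ∉ U) v v' ∧
        G.Adj v' u' ∧ u' ∈ U := by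
  have key : ∀ (v c : V) (_ : G.Walk v c), c ∈ U → v ∉ U → ∃ v' u',
      Relation.ReflTransGen (fun x y => G.Adj x y ∧ x ∉ U ∧ y ∉ U) v v' ∧
        G.Adj v' u' ∧ u' ∈ U := by
    intro v c w
    induction w with
    | nil => exact fun hc hv => absurd hc hv
    | @cons x y _ hadj p ih =>
      intro hc hv
      by_cases hy : y ∈ U
      · exact ⟨x, y, .refl, hadj, hy⟩
      · obtain ⟨v', u', hp, ha, hu⟩ := ih hc hy
        exact ⟨v', u', .head ⟨hadj, hv, hy⟩ hp, ha, hu⟩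
  intro v hv
  exact (hG.preconnected v b0).elim fun w => key v b0 w hb hv

/-- Main construction: a non-closable arc yields a directed cocycle. -/
private lemma exists_dirCocycle (hG : G.Connected) (O : GraphOrientation G) {a b : V}
    (hab : O.dir a b) (hna : ¬ O.Reaches b a) : ∃ D, O.IsDirCocycle D := by
  classical
  set U : Set V := {v | O.Reaches b v} with hUdef
  have hbU : b ∈ U := Relation.ReflTransGen.refl
  have haU : a ∉ U := hna
  have hUclosed : ∀ x y, O.dir x y → x ∈ U → y ∈ U := fun x y hd hx =>
    Relation.ReflTransGen.tail hx hd
  -- the step relation within Uᶜ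
  set S : V → V → Prop := fun x y => G.Adj x y ∧ x ∉ U ∧ y ∉ U with hSdef
  have hSsymm : Symmetric S := fun x y ⟨h1, h2, h3⟩ => ⟨h1.symm, h3, h2⟩
  -- X : the component of a within Uᶜ ; W := Xᶜ
  set X : Set V := {v | Relation.ReflTransGen S a v} with hXdef
  set W : Set V := Xᶜ with hWdef
  have haX : a ∈ X := Relation.ReflTransGen.refl
  have hXU : ∀ z ∈ X, z ∉ U := by
    intro z hz
    have hz' : Relation.ReflTransGen S a z := hz
    induction hz' with
    | refl => exact haU
    | tail _ hs _ => exact hs.2.2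
  have hUW : ∀ z ∈ U, z ∈ W := fun z hz hzX => hXU z hzX hz
  have hbW : b ∈ W := hUW b hbU
  have haW : a ∉ W := fun h => h haX
  have hXofnW : ∀ z, z ∉ W → z ∈ X := fun z hz => not_not.mp hz
  -- every edge from W to X has its W-endpoint in U
  have hcrossU : ∀ x y, G.Adj x y → x ∈ W → y ∈ X → x ∈ U := by
    intro x y hadj hxW hyX
    by_contra hxU
    exact hxW (Relation.ReflTransGen.tail hyX ⟨hadj.symm, hXU y hyX, hxU⟩)
  refine ⟨G.cutSet W, ⟨⟨⟨s(b, a), b, a, rfl, (O.adj_of_dir a b hab).symm, hbW, haW⟩,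
    ⟨W, rfl⟩, ?_⟩, W, rfl, ?_⟩⟩
  · -- minimality
    intro D' hne hU' hsub
    obtain ⟨U', hD'⟩ := hU'
    refine cut_minimal (fun z => Iff.rfl) ?_ ?_ hne hD' hsub
    · -- W is connected
      have hreach : ∀ u ∈ U, Relation.ReflTransGen (stepIn G W) b u := by
        intro u hu
        have hu' : O.Reaches b u := hu
        induction hu' with
        | refl => exact .refl
        | @tail m n h' hs ih =>
          have hmU : m ∈ U := h'
          have hnU : n ∈ U := hUclosed m n hs hmU
          exact (ih hmU).tail ⟨O.adj_of_dir m n hs, hUW m hmU, hUW n hnU⟩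
      -- lift a path in Uᶜ avoiding X to a path in W
      have hlift : ∀ {x z : V}, x ∈ W → Relation.ReflTransGen S x z →
          Relation.ReflTransGen (stepIn G W) x z := by
        intro x z hxW h
        induction h with
        | refl => exact .refl
        | @tail m n h' hs ih =>
          have hmW : m ∈ W := rtg_mem (ih) hxW
          have hnW : n ∈ W := by
            intro hnX
            exact hmW (Relation.ReflTransGen.tail hnX (hSsymm hs))
          exact ih.tail ⟨hs.1, hmW, hnW⟩
      have hfromb : ∀ x ∈ W, Relation.ReflTransGen (stepIn G W) b x := by
        intro x hx
        by_cases hxU : x ∈ U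
        · exact hreach x hxU
        · obtain ⟨v', u', hp, ha', hu'⟩ := exit_lemma hG hbU x hxU
          have hpath : Relation.ReflTransGen (stepIn G W) x v' := hlift hx hp
          have hv'W : v' ∈ W := rtg_mem hpath hx
          have hchain : Relation.ReflTransGen (stepIn G W) b v' :=
            (hreach u' hu').tail ⟨ha'.symm, hUW u' hu', hv'W⟩
          exact hchain.trans (((@Relation.ReflTransGen.stdSymm _ _ ⟨fun _ _ h => stepIn_symm h⟩).symm _ _) hpath)
      intro x y hx hy
      exact (((@Relation.ReflTransGen.stdSymm _ _ ⟨fun _ _ h => stepIn_symm h⟩).symm _ _) (hfromb x hx)).trans (hfromb y hy)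
    · -- X is connected
      have hfroma : ∀ x ∈ X, Relation.ReflTransGen (stepIn G X) a x := by
        intro x hx
        have hx' : Relation.ReflTransGen S a x := hx
        induction hx' with
        | refl => exact .refl
        | @tail m n h' hs ih =>
          have hmX : m ∈ X := h'
          have hnX : n ∈ X := Relation.ReflTransGen.tail hmX hs
          exact (ih hmX).tail ⟨hs.1, hmX, hnX⟩
      intro x y hx hy
      exact (((@Relation.ReflTransGen.stdSymm _ _ ⟨fun _ _ h => stepIn_symm h⟩).symm _ _) (hfroma x hx)).trans (hfroma y hy)
  · -- directedness: arcs of the cut point into W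
    intro p q hd hmem
    obtain ⟨x, y, heq, hadj, hxW, hyW⟩ := hmem
    rcases Sym2.eq_iff.mp heq with ⟨rfl, rfl⟩ | ⟨rfl, rfl⟩
    · -- p ∈ W, q ∉ W : impossible since then p ∈ U and q ∈ U
      have hpU : p ∈ U := hcrossU p q hadj hxW (hXofnW q hyW)
      exact absurd (hUclosed p q hd hpU) (hXU q (hXofnW q hyW))
    · exact hxW

end Aux

theorem statement5 {V : Type*} [Fintype V] (G : SimpleGraph V) (hG : G.Connected)
    (O : GraphOrientation G) :
    List.TFAE [O.IsStronglyConnected,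
      ¬ ∃ D : Set (Sym2 V), O.IsDirCocycle D,
      ∀ a b, O.dir a b → O.Reaches b a] := by
  tfae_have 1 → 2 := by
    rintro hsc ⟨D, ⟨⟨hne, _, _⟩, U, hDU, hdir⟩⟩
    obtain ⟨e, he⟩ := hne
    rw [hDU] at he
    obtain ⟨p, q, rfl, hadj, hpU, hqU⟩ := he
    -- directed path from p to q must cross the cut
    have hcross : ∀ x y : V, O.Reaches x y → x ∈ U → y ∉ U →
        ∃ s t, O.dir s t ∧ s ∈ U ∧ t ∉ U := by
      intro x y h
      induction h with
      | refl => exact fun hx hy => absurd hx hy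
      | @tail m n h' hs ih =>
        intro hx hy
        by_cases hm : m ∈ U
        · exact ⟨m, n, hs, hm, hy⟩
        · exact ih hx hm
    obtain ⟨s, t, hst, hsU, htU⟩ := hcross p q (hsc p q) hpU hqU
    have : s(s, t) ∈ D := hDU ▸ ⟨s, t, rfl, O.adj_of_dir s t hst, hsU, htU⟩
    exact htU (hdir s t hst this)
  tfae_have 2 → 3 := by
    intro h2 a b hd
    by_contra hna
    exact h2 (exists_dirCocycle hG O hd hna)
  tfae_have 3 → 1 := by
    intro h3 u v
    have key : ∀ x y : V, G.Adj x y → O.Reaches x y := by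
      intro x y hxy
      rcases totalDir O hxy with hdxy | hdyx
      · exact Relation.ReflTransGen.single hdxy
      · exact h3 y x hdyx
    obtain ⟨w⟩ := hG.preconnected u v
    induction w with
    | nil => exact .refl
    | cons h p ih => exact (key _ _ h).trans ih
  tfae_finish
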